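/- Let h be a C¹ CBF for ẋ = f(x)+G(x)u with Lipschitz gradient, with compact superlevel set C, and let α be a Lipschitz extended class-κ function validating the CBF condition on D ⊇ C. Then the min-norm safe controller u*, defined by u*(x) = 0 when ∇h(x)f(x)+α(h(x)) ≥ 0 and u*(x) = −[(∇h(x)f(x)+α(h(x)))/‖∇h(x)G(x)‖²](∇h(x)G(x))ᵀ otherwise, is locally Lipschitz on C \ Z_{h,α}, where Z_{h,α} = {x ∈ C | ∇h(x)f(x)+α(h(x)) = 0 and ∇h(x)G(x) = 0}. -/

import Mathlib

open scoped RealInnerProductSpace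
open Set

private lemma locallyLipschitz_pi_of {X : Type*} [PseudoEMetricSpace X] {ι : Type*} [Fintype ι]
    {E : ι → Type*} [∀ i, PseudoEMetricSpace (E i)] {g : X → ∀ i, E i}
    (hg : ∀ i, LocallyLipschitz fun x => g x i) : LocallyLipschitz g := by
  intro x
  choose K t ht hK using fun i => hg i x
  refine ⟨Finset.univ.sup K, ⋂ i, t i, Filter.iInter_mem.2 ht, fun y hy z hz => ?_⟩
  rw [edist_pi_def]
  refine Finset.sup_le fun i _ => ?_
  calc edist (g y i) (g z i) ≤ K i * edist y z :=
        hK i (Set.mem_iInter.1 hy i) (Set.mem_iInter.1 hz i)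
    _ ≤ (Finset.univ.sup K : NNReal) * edist y z :=
        mul_le_mul_left (ENNReal.coe_le_coe.2 (Finset.le_sup (Finset.mem_univ i))) _

private lemma locallyLipschitz_euclid {X : Type*} [PseudoEMetricSpace X] {m : ℕ}
    {g : X → EuclideanSpace ℝ (Fin m)} (hg : ∀ i, LocallyLipschitz fun x => g x i) :
    LocallyLipschitz g := by
  have h1 : LipschitzWith ((Fintype.card (Fin m) : NNReal) ^ ((1 : ENNReal) / 2).toReal)
      (WithLp.toLp 2 : (Fin m → ℝ) → EuclideanSpace ℝ (Fin m)) :=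
    PiLp.lipschitzWith_toLp 2 (fun _ : Fin m => ℝ)
  exact h1.locallyLipschitz.comp (locallyLipschitz_pi_of hg)

theorem stmt_8 (n m : ℕ) (h : EuclideanSpace ℝ (Fin n) → ℝ)
    (f : EuclideanSpace ℝ (Fin n) → EuclideanSpace ℝ (Fin n))
    (G : EuclideanSpace ℝ (Fin n) → Fin m → EuclideanSpace ℝ (Fin n))
    (α : ℝ → ℝ) (Lα Lgrad : NNReal)
    (hf : LocallyLipschitz f) (hG : ∀ i, LocallyLipschitz fun x => G x i)
    (hC1 : ContDiff ℝ 1 h) (hgradLip : LipschitzWith Lgrad (gradient h))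
    (hα : StrictMono α) (hα0 : α 0 = 0) (hαLip : LipschitzWith Lα α)
    (C : Set (EuclideanSpace ℝ (Fin n))) (hC : C = {x | 0 ≤ h x})
    (hcomp : IsCompact C)
    (hgrad : ∀ x ∈ frontier C, gradient h x ≠ 0)
    (hcbf : ∀ x ∈ C, ∃ u : Fin m → ℝ,
      0 ≤ ⟪gradient h x, f x⟫ + α (h x) + ∑ i, ⟪gradient h x, G x i⟫ * u i)
    (ustar : EuclideanSpace ℝ (Fin n) → EuclideanSpace ℝ (Fin m))
    (hustar : ∀ x, ustar x =
      if 0 ≤ ⟪gradient h x, f x⟫ + α (h x) then 0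
      else (-(⟪gradient h x, f x⟫ + α (h x)) /
          ‖(show EuclideanSpace ℝ (Fin m) from WithLp.toLp 2 fun i => ⟪gradient h x, G x i⟫)‖ ^ 2) •
        (show EuclideanSpace ℝ (Fin m) from WithLp.toLp 2 fun i => ⟪gradient h x, G x i⟫))
    (Z : Set (EuclideanSpace ℝ (Fin n)))
    (hZ : Z = {x ∈ C | ⟪gradient h x, f x⟫ + α (h x) = 0 ∧
        (fun i => ⟪gradient h x, G x i⟫) = (0 : Fin m → ℝ)}) :
    ∀ x ∈ C \ Z, ∃ K : NNReal, ∃ s ∈ nhds x, LipschitzOnWith K ustar (s ∩ (C \ Z)) := by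
  classical
  set a : EuclideanSpace ℝ (Fin n) → ℝ := fun x => ⟪gradient h x, f x⟫ + α (h x) with ha
  set b : EuclideanSpace ℝ (Fin n) → EuclideanSpace ℝ (Fin m) :=
    fun x => WithLp.toLp 2 (fun i => ⟪gradient h x, G x i⟫) with hb
  have hax : ∀ x, a x = ⟪gradient h x, f x⟫ + α (h x) := fun x => by rw [ha]
  have hbx : ∀ x, b x = (WithLp.toLp 2 fun i => ⟪gradient h x, G x i⟫ :
      EuclideanSpace ℝ (Fin m)) := fun x => by rw [hb]
  have hus : ∀ x, ustar x = if 0 ≤ a x then 0 else (-(a x) / ‖b x‖ ^ 2) • b x := by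
    intro x; rw [hax x, hbx x]; exact hustar x
  -- a and b are locally Lipschitz
  have hinner : LocallyLipschitz fun p : (EuclideanSpace ℝ (Fin n)) × (EuclideanSpace ℝ (Fin n))
      => ⟪p.1, p.2⟫ := (contDiff_inner (n := 1)).locallyLipschitz
  have hla : LocallyLipschitz a := by
    have h1 : LocallyLipschitz fun x => ⟪gradient h x, f x⟫ := by
      have h2 := hinner.comp (hgradLip.locallyLipschitz.prodMk hf)
      simpa [Function.comp_def] using h2
    have h2 : LocallyLipschitz fun x => α (h x) :=
      hαLip.locallyLipschitz.comp hC1.locallyLipschitz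
    rw [ha]
    exact h1.add h2
  have hlb : LocallyLipschitz b := by
    rw [hb]
    refine locallyLipschitz_euclid fun i => ?_
    have h2 := hinner.comp (hgradLip.locallyLipschitz.prodMk (hG i))
    simpa [Function.comp_def] using h2
  intro x₀ hx₀
  by_cases hpos : 0 < a x₀
  · refine ⟨0, {x | 0 < a x}, (isOpen_lt continuous_const hla.continuous).mem_nhds hpos,
      fun p hp q hq => ?_⟩
    have hp0 : ustar p = 0 := by rw [hus p, if_pos (le_of_lt hp.1)]
    have hq0 : ustar q = 0 := by rw [hus q, if_pos (le_of_lt hq.1)]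
    simp [hp0, hq0]
  -- main case : b x₀ ≠ 0
  · have hax₀ : a x₀ ≤ 0 := not_lt.1 hpos
    have hbne : b x₀ ≠ 0 := by
      intro h0
      have h0' : (WithLp.toLp 2 fun i => ⟪gradient h x₀, G x₀ i⟫ : EuclideanSpace ℝ (Fin m)) = 0 := by
        rw [← hbx x₀]; exact h0
      have hz0 : (fun i => ⟪gradient h x₀, G x₀ i⟫) = (0 : Fin m → ℝ) := by
        funext i
        simpa using congrArg (fun v : EuclideanSpace ℝ (Fin m) => v i) h0'
      have ha0 : a x₀ = 0 := by
        obtain ⟨u, hu⟩ := hcbf x₀ hx₀.1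
        rw [← hax x₀] at hu
        have hsum : ∑ i, ⟪gradient h x₀, G x₀ i⟫ * u i = 0 :=
          Finset.sum_eq_zero fun i _ => by
            rw [show ⟪gradient h x₀, G x₀ i⟫ = 0 from congrFun hz0 i, zero_mul]
        rw [hsum, add_zero] at hu
        exact le_antisymm hax₀ hu
      refine hx₀.2 (by rw [hZ]; refine ⟨hx₀.1, ?_, hz0⟩; rw [← hax x₀]; exact ha0)
    obtain ⟨Ka, ta, hta, hKa⟩ := hla x₀
    obtain ⟨Kb, tb, htb, hKb⟩ := hlb x₀
    set c : ℝ := ‖b x₀‖ / 2 with hcdef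
    have hc : 0 < c := div_pos (norm_pos_iff.2 hbne) two_pos
    have hU : {x | c < ‖b x‖} ∈ nhds x₀ := by
      refine (isOpen_lt continuous_const hlb.continuous.norm).mem_nhds ?_
      simp only [Set.mem_setOf_eq, hcdef]
      linarith only [norm_pos_iff.2 hbne]
    obtain ⟨r, hr, hball⟩ := (Metric.nhds_basis_closedBall.mem_iff).1
      (Filter.inter_mem (Filter.inter_mem hta htb) hU)
    set s : Set (EuclideanSpace ℝ (Fin n)) := Metric.closedBall x₀ r with hs
    have hsub : ∀ x ∈ s, x ∈ ta ∧ x ∈ tb ∧ c < ‖b x‖ := by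
      intro x hx
      have := hball hx
      exact ⟨this.1.1, this.1.2, this.2⟩
    set A : ℝ := |a x₀| + (Ka : ℝ) * r with hA
    set B : ℝ := ‖b x₀‖ + (Kb : ℝ) * r with hB
    have hA0 : 0 ≤ A := add_nonneg (abs_nonneg _) (mul_nonneg Ka.coe_nonneg hr.le)
    have hB0 : 0 ≤ B := add_nonneg (norm_nonneg _) (mul_nonneg Kb.coe_nonneg hr.le)
    have hx₀s : x₀ ∈ s := Metric.mem_closedBall_self hr.le
    have da : ∀ x ∈ s, ∀ y ∈ s, |a x - a y| ≤ (Ka : ℝ) * dist x y := by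
      intro x hx y hy
      have := hKa.dist_le_mul x (hsub x hx).1 y (hsub y hy).1
      rwa [Real.dist_eq] at this
    have db : ∀ x ∈ s, ∀ y ∈ s, ‖b x - b y‖ ≤ (Kb : ℝ) * dist x y := by
      intro x hx y hy
      have := hKb.dist_le_mul x (hsub x hx).2.1 y (hsub y hy).2.1
      rwa [dist_eq_norm] at this
    have bA : ∀ x ∈ s, |a x| ≤ A := by
      intro x hx
      have h1 := da x hx x₀ hx₀s
      have h2 : dist x x₀ ≤ r := Metric.mem_closedBall.1 hx
      have h3 : |a x| ≤ |a x₀| + |a x - a x₀| := by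
        calc |a x| = |a x₀ + (a x - a x₀)| := by congr 1; abel
          _ ≤ |a x₀| + |a x - a x₀| := abs_add_le _ _
      have hKa0 : (0:ℝ) ≤ (Ka : ℝ) := Ka.coe_nonneg
      nlinarith only [h1, h2, h3, hKa0, hA, abs_nonneg (a x - a x₀), dist_nonneg (x := x) (y := x₀)]
    have bB : ∀ x ∈ s, ‖b x‖ ≤ B := by
      intro x hx
      have h1 := db x hx x₀ hx₀s
      have h2 : dist x x₀ ≤ r := Metric.mem_closedBall.1 hx
      have h3 : ‖b x‖ ≤ ‖b x₀‖ + ‖b x - b x₀‖ := by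
        calc ‖b x‖ = ‖b x₀ + (b x - b x₀)‖ := by congr 1; abel
          _ ≤ ‖b x₀‖ + ‖b x - b x₀‖ := norm_add_le _ _
      have hKb0 : (0:ℝ) ≤ (Kb : ℝ) := Kb.coe_nonneg
      nlinarith only [h1, h2, h3, hKb0, hB, norm_nonneg (b x - b x₀), dist_nonneg (x := x) (y := x₀)]
    have bc : ∀ x ∈ s, c ≤ ‖b x‖ := fun x hx => (hsub x hx).2.2.le
    -- the controller in closed form on s
    have key : ∀ x ∈ s, ustar x = (max (-(a x)) 0 / ‖b x‖ ^ 2) • b x := by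
      intro x hx
      rw [hus x]
      by_cases hax : 0 ≤ a x
      · rw [if_pos hax, max_eq_right (neg_nonpos.2 hax), zero_div, zero_smul]
      · rw [if_neg hax, max_eq_left (le_of_lt (by push_neg at hax; linarith))]
    -- the Lipschitz constant
    set Kf : ℝ := (A / c ^ 2) * (Kb : ℝ) + (((Ka : ℝ) * B ^ 2 + 2 * A * B * (Kb : ℝ)) / c ^ 4) * B
      with hKf
    refine ⟨Real.toNNReal Kf, s, Metric.closedBall_mem_nhds x₀ hr, ?_⟩
    refine LipschitzOnWith.of_dist_le_mul fun x hx y hy => ?_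
    have hxs : x ∈ s := hx.1
    have hys : y ∈ s := hy.1
    set d : ℝ := dist x y with hd
    have hd0 : 0 ≤ d := dist_nonneg
    have hKa0 : (0:ℝ) ≤ (Ka : ℝ) := Ka.coe_nonneg
    have hKb0 : (0:ℝ) ≤ (Kb : ℝ) := Kb.coe_nonneg
    have dab := da x hxs y hys
    have dbb := db x hxs y hys
    have hax := bA x hxs
    have hay := bA y hys
    have hbx := bB x hxs
    have hby := bB y hys
    have hcx := bc x hxs
    have hcy := bc y hys
    set mx : ℝ := max (-(a x)) 0 with hmx
    set my : ℝ := max (-(a y)) 0 with hmy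
    set px : ℝ := ‖b x‖ ^ 2 with hpx
    set py : ℝ := ‖b y‖ ^ 2 with hpy
    have hmx0 : 0 ≤ mx := le_max_right _ _
    have hmy0 : 0 ≤ my := le_max_right _ _
    have hmxA : mx ≤ A := max_le (le_trans (neg_le_abs _) hax) hA0
    have hmyA : my ≤ A := max_le (le_trans (neg_le_abs _) hay) hA0
    have hpxc : c ^ 2 ≤ px := by rw [hpx]; nlinarith only [hcx, hc]
    have hpyc : c ^ 2 ≤ py := by rw [hpy]; nlinarith only [hcy, hc]
    have hc2 : 0 < c ^ 2 := pow_pos hc 2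
    have hpx0 : 0 < px := lt_of_lt_of_le hc2 hpxc
    have hpy0 : 0 < py := lt_of_lt_of_le hc2 hpyc
    have hpxB : px ≤ B ^ 2 := by rw [hpx]; nlinarith only [hbx, norm_nonneg (b x), hB0]
    have hpyB : py ≤ B ^ 2 := by rw [hpy]; nlinarith only [hby, norm_nonneg (b y), hB0]
    have dm : |mx - my| ≤ (Ka : ℝ) * d := by
      refine le_trans (abs_max_sub_max_le_abs _ _ _) ?_
      rwa [neg_sub_neg, abs_sub_comm]
    have dnorm : |‖b x‖ - ‖b y‖| ≤ (Kb : ℝ) * d := le_trans (abs_norm_sub_norm_le _ _) dbb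
    have dp : |px - py| ≤ 2 * B * ((Kb : ℝ) * d) := by
      have e : px - py = (‖b x‖ - ‖b y‖) * (‖b x‖ + ‖b y‖) := by rw [hpx, hpy]; ring
      rw [e, abs_mul]
      have h1 : |‖b x‖ + ‖b y‖| ≤ 2 * B := by
        rw [abs_of_nonneg (add_nonneg (norm_nonneg _) (norm_nonneg _))]
        linarith only [hbx, hby]
      calc |‖b x‖ - ‖b y‖| * |‖b x‖ + ‖b y‖| ≤ ((Kb : ℝ) * d) * (2 * B) := by
            apply mul_le_mul dnorm h1 (abs_nonneg _) (mul_nonneg hKb0 hd0)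
        _ = 2 * B * ((Kb : ℝ) * d) := by ring
    -- lambda bounds
    have hlx : |mx / px| ≤ A / c ^ 2 := by
      rw [abs_div, abs_of_nonneg hmx0, abs_of_pos hpx0]
      exact div_le_div₀ hA0 hmxA hc2 hpxc
    have dl : |mx / px - my / py| ≤ (((Ka : ℝ) * B ^ 2 + 2 * A * B * (Kb : ℝ)) / c ^ 4) * d := by
      have hpx' : px ≠ 0 := ne_of_gt hpx0
      have hpy' : py ≠ 0 := ne_of_gt hpy0
      have e : mx / px - my / py = ((mx - my) * py + my * (py - px)) / (px * py) := by
        field_simp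
        ring
      rw [e, abs_div]
      have hnum : |(mx - my) * py + my * (py - px)| ≤
          (Ka : ℝ) * d * B ^ 2 + A * (2 * B * ((Kb : ℝ) * d)) := by
        refine le_trans (abs_add_le _ _) ?_
        have h1 : |(mx - my) * py| ≤ (Ka : ℝ) * d * B ^ 2 := by
          rw [abs_mul, abs_of_pos hpy0]
          exact mul_le_mul dm hpyB (le_of_lt hpy0) (mul_nonneg hKa0 hd0)
        have h2 : |my * (py - px)| ≤ A * (2 * B * ((Kb : ℝ) * d)) := by
          rw [abs_mul, abs_of_nonneg hmy0, abs_sub_comm]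
          exact mul_le_mul hmyA dp (abs_nonneg _) hA0
        linarith
      have hden : c ^ 4 ≤ |px * py| := by
        rw [abs_of_pos (mul_pos hpx0 hpy0)]
        nlinarith only [hpxc, hpyc, hc2, hpx0, hpy0]
      calc |(mx - my) * py + my * (py - px)| / |px * py|
          ≤ ((Ka : ℝ) * d * B ^ 2 + A * (2 * B * ((Kb : ℝ) * d))) / c ^ 4 :=
            div_le_div₀ (add_nonneg (mul_nonneg (mul_nonneg hKa0 hd0) (sq_nonneg B))
              (mul_nonneg hA0 (mul_nonneg (mul_nonneg zero_le_two hB0)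
                (mul_nonneg hKb0 hd0)))) hnum (pow_pos hc 4) hden
        _ = (((Ka : ℝ) * B ^ 2 + 2 * A * B * (Kb : ℝ)) / c ^ 4) * d := by ring
    -- final estimate
    rw [key x hxs, key y hys, dist_eq_norm]
    have e : (mx / px) • b x - (my / py) • b y
        = (mx / px) • (b x - b y) + (mx / px - my / py) • b y := by
      rw [smul_sub, sub_smul]; abel
    calc ‖(mx / px) • b x - (my / py) • b y‖
        ≤ ‖(mx / px) • (b x - b y)‖ + ‖(mx / px - my / py) • b y‖ := by
          rw [e]; exact norm_add_le _ _
      _ = |mx / px| * ‖b x - b y‖ + |mx / px - my / py| * ‖b y‖ := by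
          rw [norm_smul, norm_smul, Real.norm_eq_abs, Real.norm_eq_abs]
      _ ≤ (A / c ^ 2) * ((Kb : ℝ) * d)
          + ((((Ka : ℝ) * B ^ 2 + 2 * A * B * (Kb : ℝ)) / c ^ 4) * d) * B := by
          refine add_le_add ?_ ?_
          · exact mul_le_mul hlx dbb (norm_nonneg _) (div_nonneg hA0 hc2.le)
          · exact mul_le_mul dl hby (norm_nonneg _)
              (mul_nonneg (div_nonneg (add_nonneg (mul_nonneg hKa0 (sq_nonneg B))
                (mul_nonneg (mul_nonneg (mul_nonneg zero_le_two hA0) hB0) hKb0))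
                (pow_pos hc 4).le) hd0)
      _ = Kf * d := by rw [hKf]; ring
      _ ≤ (Real.toNNReal Kf : ℝ) * d :=
          mul_le_mul_of_nonneg_right (Real.le_coe_toNNReal Kf) hd0
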